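/- Let F be a Borel probability measure on [0,1], θ₁, θ₂ > 0, θ = θ₁+θ₂, and L g(x) = (1/2)x(1−x)E[g''(x(1−W)+WV)] + (1/2)(θ₁−θx)g'(x). Set λ_n = (n/2)( (n−1) E[(1−W)^{n−2}] + θ ) and λ_n° = (n/2)( (n−1) E[(1−W)^{n−2}] + θ₁ ). Suppose (g_n)_{n≥0} is a sequence of polynomials with g_0 = 1 satisfying L g_n(x) = −λ_n g_n(x) + λ_n° g_{n−1}(x) for all n ≥ 1 and all x ∈ [0,1], and suppose μ is a Borel probability measure on [0,1] with ∫ L g dμ = 0 for every polynomial g. Then for every n ≥ 1: ∫ g_n dμ = ∏_{j=1}^{n} ( (j−1) E[(1−W)^{j−2}] + θ₁ ) / ∏_{j=1}^{n} ( (j−1) E[(1−W)^{j−2}] + θ ). -/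
import Mathlib


open MeasureTheory Set

/-- The two-type Λ-Fleming-Viot generator with mutation,
`L g(x) = (1/2) x(1-x) E[g''(x(1-W)+WV)] + (1/2)(θ₁ - θ x) g'(x)`,
where `W = U⬝Y`, `Y ∼ F`, `U` with density `2u` on `(0,1)`, `V` uniform on `(0,1)`. -/
noncomputable def Lop (F : Measure ℝ) (θ₁ θ₂ : ℝ) (g : ℝ → ℝ) (x : ℝ) : ℝ :=
  (1/2) * x * (1 - x) *
    (∫ y, (∫ u in Set.Ioo (0:ℝ) 1, (∫ v in Set.Ioo (0:ℝ) 1,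
      deriv (deriv g) (x * (1 - u * y) + u * y * v)) * (2 * u)) ∂F)
  + (1/2) * (θ₁ - (θ₁ + θ₂) * x) * deriv g x

/-- `E[(1-W)^j]` where `W = U⬝Y`. -/
noncomputable def expMom (F : Measure ℝ) (j : ℕ) : ℝ :=
  ∫ y, (∫ u in Set.Ioo (0:ℝ) 1, (1 - u * y) ^ j * (2 * u)) ∂F

lemma expMom_nonneg (F : Measure ℝ) (hF : F (Set.Icc (0:ℝ) 1)ᶜ = 0) (j : ℕ) :
    0 ≤ expMom F j := by
  apply integral_nonneg_of_ae
  have h : ∀ᵐ y ∂F, y ∈ Set.Icc (0:ℝ) 1 := ae_iff.mpr hF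
  filter_upwards [h] with y hy
  apply setIntegral_nonneg measurableSet_Ioo
  intro u hu
  have h1 : 0 ≤ 1 - u * y := by nlinarith [hy.1, hy.2, hu.1, hu.2]
  have h2 : (0:ℝ) ≤ 2 * u := by linarith [hu.1]
  exact mul_nonneg (pow_nonneg h1 j) h2

lemma poly_integrable (μ : Measure ℝ) [IsProbabilityMeasure μ]
    (hμ : μ (Set.Icc (0:ℝ) 1)ᶜ = 0) (p : Polynomial ℝ) :
    Integrable (fun x => Polynomial.eval x p) μ := by
  obtain ⟨C, hC⟩ := (isCompact_Icc (a := (0:ℝ)) (b := 1)).exists_bound_of_continuousOn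
    p.continuous.continuousOn
  refine Integrable.mono' (integrable_const C) p.continuous.aestronglyMeasurable ?_
  have h : ∀ᵐ x ∂μ, x ∈ Set.Icc (0:ℝ) 1 := ae_iff.mpr hμ
  filter_upwards [h] with x hx using hC x hx

/-- if the polynomials `g_n` satisfy `L g_n = -λ_n g_n + λ_n° g_{n-1}` with
`λ_n = (n/2)((n-1)E[(1-W)^{n-2}] + θ)` and `λ_n° = (n/2)((n-1)E[(1-W)^{n-2}] + θ₁)`,
and `μ` is stationary, then `∫ g_n dμ` equals the Beta-moment analogue. -/
theorem stmt16 (F : Measure ℝ) [IsProbabilityMeasure F]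
    (hF : F (Set.Icc (0:ℝ) 1)ᶜ = 0)
    (θ₁ θ₂ : ℝ) (hθ₁ : 0 < θ₁) (hθ₂ : 0 < θ₂)
    (g : ℕ → Polynomial ℝ) (hg0 : g 0 = 1)
    (hrec : ∀ n : ℕ, 1 ≤ n → ∀ x ∈ Set.Icc (0:ℝ) 1,
      Lop F θ₁ θ₂ (fun t => Polynomial.eval t (g n)) x
        = -(((n : ℝ) / 2) * (((n : ℝ) - 1) * expMom F (n - 2) + (θ₁ + θ₂))) *
            Polynomial.eval x (g n)
          + (((n : ℝ) / 2) * (((n : ℝ) - 1) * expMom F (n - 2) + θ₁)) *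
            Polynomial.eval x (g (n - 1)))
    (μ : Measure ℝ) [IsProbabilityMeasure μ] (hμ : μ (Set.Icc (0:ℝ) 1)ᶜ = 0)
    (hstat : ∀ p : Polynomial ℝ, ∫ x, Lop F θ₁ θ₂ (fun t => Polynomial.eval t p) x ∂μ = 0) :
    ∀ n : ℕ, 1 ≤ n →
      ∫ x, Polynomial.eval x (g n) ∂μ
        = (∏ j ∈ Finset.Icc 1 n, (((j : ℝ) - 1) * expMom F (j - 2) + θ₁)) /
          (∏ j ∈ Finset.Icc 1 n, (((j : ℝ) - 1) * expMom F (j - 2) + (θ₁ + θ₂))) := by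
  have hEM : ∀ j, 0 ≤ expMom F j := expMom_nonneg F hF
  have hA : ∀ j : ℕ, 1 ≤ j → 0 < ((j : ℝ) - 1) * expMom F (j - 2) + θ₁ := by
    intro j hj
    have h1 : (0:ℝ) ≤ (j : ℝ) - 1 := by
      have : (1:ℝ) ≤ (j : ℝ) := by exact_mod_cast hj
      linarith
    nlinarith [hEM (j - 2)]
  have hB : ∀ j : ℕ, 1 ≤ j → 0 < ((j : ℝ) - 1) * expMom F (j - 2) + (θ₁ + θ₂) := by
    intro j hj
    have h1 : (0:ℝ) ≤ (j : ℝ) - 1 := by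
      have : (1:ℝ) ≤ (j : ℝ) := by exact_mod_cast hj
      linarith
    nlinarith [hEM (j - 2)]
  have hxae : ∀ᵐ x ∂μ, x ∈ Set.Icc (0:ℝ) 1 := ae_iff.mpr hμ
  have hint : ∀ q : Polynomial ℝ, Integrable (fun x => Polynomial.eval x q) μ :=
    poly_integrable μ hμ
  have key : ∀ n : ℕ, ∫ x, Polynomial.eval x (g n) ∂μ
      = (∏ j ∈ Finset.Icc 1 n, (((j : ℝ) - 1) * expMom F (j - 2) + θ₁)) /
        (∏ j ∈ Finset.Icc 1 n, (((j : ℝ) - 1) * expMom F (j - 2) + (θ₁ + θ₂))) := by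
    intro n
    induction n with
    | zero => simp [hg0]
    | succ n ih =>
      set lam : ℝ := ((↑(n+1) : ℝ) / 2) *
        (((↑(n+1) : ℝ) - 1) * expMom F (n + 1 - 2) + (θ₁ + θ₂)) with hlam
      set lam0 : ℝ := ((↑(n+1) : ℝ) / 2) *
        (((↑(n+1) : ℝ) - 1) * expMom F (n + 1 - 2) + θ₁) with hlam0
      have h0 := hstat (g (n+1))
      have heq : ∫ x, Lop F θ₁ θ₂ (fun t => Polynomial.eval t (g (n+1))) x ∂μ
          = ∫ x, (-lam * Polynomial.eval x (g (n+1)) + lam0 * Polynomial.eval x (g n)) ∂μ := by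
        apply integral_congr_ae
        filter_upwards [hxae] with x hx
        have h := hrec (n+1) (by omega) x hx
        simpa [hlam, hlam0, Nat.add_sub_cancel] using h
      rw [h0] at heq
      rw [integral_add ((hint (g (n+1))).const_mul _) ((hint (g n)).const_mul _),
        integral_const_mul, integral_const_mul] at heq
      have hc : (0:ℝ) < (↑(n+1) : ℝ) / 2 := by positivity
      rw [Finset.prod_Icc_succ_top (by omega : 1 ≤ n + 1),
        Finset.prod_Icc_succ_top (by omega : 1 ≤ n + 1)]
      set I1 : ℝ := ∫ x, Polynomial.eval x (g (n+1)) ∂μ with hI1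
      set I0 : ℝ := ∫ x, Polynomial.eval x (g n) ∂μ with hI0
      set An : ℝ := ((↑(n+1) : ℝ) - 1) * expMom F (n + 1 - 2) + θ₁ with hAndef
      set Bn : ℝ := ((↑(n+1) : ℝ) - 1) * expMom F (n + 1 - 2) + (θ₁ + θ₂) with hBndef
      set P : ℝ := ∏ j ∈ Finset.Icc 1 n, (((j : ℝ) - 1) * expMom F (j - 2) + θ₁) with hPdef
      set Q : ℝ := ∏ j ∈ Finset.Icc 1 n, (((j : ℝ) - 1) * expMom F (j - 2) + (θ₁ + θ₂))
        with hQdef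
      have hBn : (0:ℝ) < Bn := hB (n+1) (by omega)
      have hQpos : (0:ℝ) < Q := by
        rw [hQdef]
        exact Finset.prod_pos fun j hj => hB j (Finset.mem_Icc.mp hj).1
      have hI : lam * I1 = lam0 * I0 := by linarith [heq]
      rw [hlam, hlam0] at hI
      have h3 : ((↑(n+1) : ℝ) / 2) * (Bn * I1) = ((↑(n+1) : ℝ) / 2) * (An * I0) := by
        linear_combination hI
      have h4 : Bn * I1 = An * I0 := mul_left_cancel₀ (ne_of_gt hc) h3
      have hP : I0 * Q = P := by
        rw [ih]
        field_simp
      rw [eq_div_iff (by positivity : Q * Bn ≠ 0)]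
      linear_combination Q * h4 + An * hP
  intro n _
  exact key n
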